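/- Let θ : Fin R × Fin M → ℝ and define for K ≥ 1 the K-fold repeated parameters θᴷ : Fin (K·R) × Fin M → ℝ by θᴷ_{r,j} = θ_{r mod R, j}. Define χ_{j,j'}(θ) = (1/2)·∑_{r} θ_{r,j} θ_{r,j'} + (1/2)·∑_{r>r'} (θ_{r,j} θ_{r',j'} − θ_{r,j'} θ_{r',j}), where the second sum runs over pairs r > r' in Fin R. Then for all j, j': χ_{j,j'}(θᴷ) = K · χ_{j,j'}(θ) (with the χ for θᴷ computed with R replaced by K·R). -/

import Mathlib

open Finset

/-- The second-order BCH coefficient `χ_{j,j'}(θ)` for an ansatz with `R` layers. -/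
noncomputable def chi (R M : ℕ) (θ : Fin R × Fin M → ℝ) (j j' : Fin M) : ℝ :=
  (1 / 2) * ∑ r : Fin R, θ (r, j) * θ (r, j') +
    (1 / 2) * ∑ r : Fin R, ∑ r' ∈ univ.filter (fun r' => r' < r),
      (θ (r, j) * θ (r', j') - θ (r, j') * θ (r', j))

private lemma sum_fin_filter_lt {n : ℕ} (r : Fin n) (G : ℕ → ℝ) :
    ∑ r' ∈ univ.filter (fun r' : Fin n => r' < r), G r'.val = ∑ i ∈ range r.val, G i := by
  rw [sum_filter]
  simp only [Fin.lt_def]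
  rw [Fin.sum_univ_eq_sum_range (fun i => if i < (r : ℕ) then G i else 0), ← sum_filter]
  congr 1
  ext i
  simp only [mem_filter, mem_range]
  omega

private lemma sum_range_mod (R : ℕ) (h : ℕ → ℝ) :
    ∀ K : ℕ, ∑ r ∈ range (K * R), h (r % R) = K * ∑ r ∈ range R, h r := by
  intro K
  induction K with
  | zero => simp
  | succ k ih =>
    rw [Nat.succ_mul, sum_range_add, ih]
    have : ∀ i ∈ range R, h ((k * R + i) % R) = h i := by
      intro i hi
      rw [Nat.add_comm, Nat.add_mul_mod_self_right, Nat.mod_eq_of_lt (mem_range.mp hi)]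
    rw [sum_congr rfl this]
    push_cast
    ring

private lemma double_antisym_zero (R : ℕ) (F : ℕ → ℕ → ℝ) (hF : ∀ a b, F a b = - F b a) :
    ∑ i ∈ range R, ∑ j ∈ range R, F i j = 0 := by
  have h := Finset.sum_comm (s := range R) (t := range R) (f := fun i j => F i j)
  have h2 : ∑ i ∈ range R, ∑ j ∈ range R, F i j
      = - ∑ i ∈ range R, ∑ j ∈ range R, F i j := by
    nth_rewrite 1 [h]
    rw [← Finset.sum_neg_distrib]
    refine sum_congr rfl fun j _ => ?_
    rw [← Finset.sum_neg_distrib]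
    exact sum_congr rfl fun i _ => hF i j
  linarith

private lemma double_repeat (R : ℕ) (F : ℕ → ℕ → ℝ) (hF : ∀ a b, F a b = - F b a) :
    ∀ K : ℕ, ∑ r ∈ range (K * R), ∑ r' ∈ range r, F (r % R) (r' % R)
      = K * ∑ r ∈ range R, ∑ r' ∈ range r, F r r' := by
  intro K
  induction K with
  | zero => simp
  | succ k ih =>
    rw [Nat.succ_mul, sum_range_add, ih]
    have hblock : ∀ i ∈ range R,
        ∑ r' ∈ range (k * R + i), F ((k * R + i) % R) (r' % R)
          = (∑ r' ∈ range (k * R), F i (r' % R)) + ∑ t ∈ range i, F i t := by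
      intro i hi
      have hi' := mem_range.mp hi
      have hm : (k * R + i) % R = i := by rw [Nat.add_comm, Nat.add_mul_mod_self_right, Nat.mod_eq_of_lt hi']
      rw [hm, sum_range_add]
      congr 1
      refine sum_congr rfl fun t ht => ?_
      rw [Nat.add_comm, Nat.add_mul_mod_self_right, Nat.mod_eq_of_lt (lt_trans (mem_range.mp ht) hi')]
    rw [sum_congr rfl hblock, sum_add_distrib]
    have hcross : ∑ i ∈ range R, ∑ r' ∈ range (k * R), F i (r' % R) = 0 := by
      have h3 : ∀ i ∈ range R, ∑ r' ∈ range (k * R), F i (r' % R)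
          = k * ∑ r' ∈ range R, F i r' := fun i _ => sum_range_mod R (F i) k
      rw [sum_congr rfl h3, ← mul_sum, double_antisym_zero R F hF, mul_zero]
    rw [hcross]
    push_cast
    ring

private noncomputable def chiN (R : ℕ) (f g : ℕ → ℝ) : ℝ :=
  (1 / 2) * ∑ r ∈ range R, f r * g r +
    (1 / 2) * ∑ r ∈ range R, ∑ r' ∈ range r, (f r * g r' - g r * f r')

private lemma chiN_repeat (R : ℕ) (f g : ℕ → ℝ) (K : ℕ) :
    chiN (K * R) (fun r => f (r % R)) (fun r => g (r % R)) = K * chiN R f g := by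
  unfold chiN
  have h1 : ∑ r ∈ range (K * R), f (r % R) * g (r % R)
      = K * ∑ r ∈ range R, f r * g r := sum_range_mod R (fun r => f r * g r) K
  have h2 := double_repeat R (fun a b => f a * g b - g a * f b) (fun a b => by ring) K
  rw [h1, h2]
  ring

private lemma chi_eq_chiN (R M : ℕ) (hR : 0 < R) (θ : Fin R × Fin M → ℝ) (j j' : Fin M) :
    chi R M θ j j'
      = chiN R (fun r => θ (⟨r % R, Nat.mod_lt _ hR⟩, j))
          (fun r => θ (⟨r % R, Nat.mod_lt _ hR⟩, j')) := by
  set f : ℕ → ℝ := fun r => θ (⟨r % R, Nat.mod_lt _ hR⟩, j) with hfdef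
  set g : ℕ → ℝ := fun r => θ (⟨r % R, Nat.mod_lt _ hR⟩, j') with hgdef
  have hf : ∀ r : Fin R, f (r : ℕ) = θ (r, j) := fun r => by
    simp [hfdef, Nat.mod_eq_of_lt r.isLt]
  have hg : ∀ r : Fin R, g (r : ℕ) = θ (r, j') := fun r => by
    simp [hgdef, Nat.mod_eq_of_lt r.isLt]
  unfold chi chiN
  congr 1
  · rw [← Fin.sum_univ_eq_sum_range (fun i => f i * g i)]
    exact congrArg _ (sum_congr rfl fun r _ => by rw [hf, hg])
  · rw [← Fin.sum_univ_eq_sum_range (fun n => ∑ i ∈ range n, (f n * g i - g n * f i))]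
    refine congrArg _ (sum_congr rfl fun r _ => ?_)
    rw [← sum_fin_filter_lt r (fun i => f (r : ℕ) * g i - g (r : ℕ) * f i)]
    refine sum_congr rfl fun r' _ => ?_
    rw [hf, hg, hf, hg]

/-- Repeating the `R`-layer parameters `K` times multiplies `χ` by `K`. -/
theorem chi_repeat (K R M : ℕ) (hK : 0 < K) (hR : 0 < R)
    (θ : Fin R × Fin M → ℝ) (j j' : Fin M) :
    chi (K * R) M
      (fun p => θ (⟨(p.1 : ℕ) % R, Nat.mod_lt _ hR⟩, p.2)) j j'
      = (K : ℝ) * chi R M θ j j' := by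
  have hKR : 0 < K * R := Nat.mul_pos hK hR
  rw [chi_eq_chiN (K * R) M hKR _ j j', chi_eq_chiN R M hR θ j j']
  set f : ℕ → ℝ := fun r => θ (⟨r % R, Nat.mod_lt _ hR⟩, j) with hfdef
  set g : ℕ → ℝ := fun r => θ (⟨r % R, Nat.mod_lt _ hR⟩, j') with hgdef
  have hmod : ∀ r : ℕ, r % (K * R) % R = r % R := fun r =>
    Nat.mod_mod_of_dvd r ⟨K, mul_comm K R⟩
  have hF : (fun r : ℕ => θ (⟨(((⟨r % (K * R), Nat.mod_lt _ hKR⟩ : Fin (K * R)) : ℕ)) % R,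
      Nat.mod_lt _ hR⟩, j)) = fun r => f (r % R) := by
    funext r
    simp [hfdef, hmod r]
  have hG : (fun r : ℕ => θ (⟨(((⟨r % (K * R), Nat.mod_lt _ hKR⟩ : Fin (K * R)) : ℕ)) % R,
      Nat.mod_lt _ hR⟩, j')) = fun r => g (r % R) := by
    funext r
    simp [hgdef, hmod r]
  rw [hF, hG, chiN_repeat]
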